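/- Let f be γ-strongly convex, β-smooth with L-Lipschitz Hessian and minimizer x*, and κ = β/γ. If g_t satisfies ‖∇²f(x_t)g_t − ∇f(x_t)‖₂ ≤ (1/(4κ))‖∇f(x_t)‖₂ and x_{t+1} = x_t − g_t, then ‖x_{t+1} − x*‖₂ ≤ (1/4)‖x_t − x*‖₂ + (L/γ)‖x_t − x*‖₂². -/

import Mathlib

open RealInnerProductSpace

set_option maxHeartbeats 1000000 in

theorem stmt_15 {d : ℕ} (f : EuclideanSpace ℝ (Fin d) → ℝ)
    (hf : ContDiff ℝ 2 f) (γ β L : ℝ) (hγ : 0 < γ) (hβ : 0 < β) (hL : 0 < L)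
    (hsc : ∀ x y : EuclideanSpace ℝ (Fin d),
      f x + ⟪gradient f x, y - x⟫ + γ / 2 * ‖y - x‖ ^ 2 ≤ f y)
    (hsmooth : ∀ x y : EuclideanSpace ℝ (Fin d),
      f y ≤ f x + ⟪gradient f x, y - x⟫ + β / 2 * ‖y - x‖ ^ 2)
    (hLip : ∀ x y : EuclideanSpace ℝ (Fin d),
      ‖fderiv ℝ (gradient f) x - fderiv ℝ (gradient f) y‖ ≤ L * ‖x - y‖)
    (xstar : EuclideanSpace ℝ (Fin d)) (hmin : ∀ y, f xstar ≤ f y)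
    (xt gt : EuclideanSpace ℝ (Fin d))
    (hg : ‖fderiv ℝ (gradient f) xt gt - gradient f xt‖
      ≤ 1 / (4 * (β / γ)) * ‖gradient f xt‖) :
    ‖(xt - gt) - xstar‖ ≤ 1 / 4 * ‖xt - xstar‖ + L / γ * ‖xt - xstar‖ ^ 2 := by
  -- the gradient is continuously differentiable
  have hg1 : ContDiff ℝ 1 (gradient f) := by
    have h1 : ContDiff ℝ 1 (fderiv ℝ f) := hf.fderiv_right (by norm_num)
    have : gradient f = fun x => (InnerProductSpace.toDual ℝ _).symm (fderiv ℝ f x) := rfl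
    rw [this]
    exact (InnerProductSpace.toDual ℝ _).symm.contDiff.comp h1
  -- the gradient vanishes at the minimizer
  have hgstar : gradient f xstar = 0 := by
    have h : IsLocalMin f xstar := Filter.Eventually.of_forall hmin
    simp [gradient, h.fderiv_eq_zero]
  set w := xt - xstar with hw
  set H := fderiv ℝ (gradient f) xt with hH
  -- strong monotonicity of the gradient
  have hmono : ∀ x y, γ * ‖y - x‖ ^ 2 ≤ ⟪gradient f y - gradient f x, y - x⟫ := by
    intro x y
    have h1 := hsc x y
    have h2 := hsc y x
    have e1 : x - y = -(y - x) := by abel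
    rw [e1, inner_neg_right, norm_neg] at h2
    rw [inner_sub_left]
    linarith
  -- lower bound on the Hessian quadratic form
  have hlower : ∀ v, γ * ‖v‖ ^ 2 ≤ ⟪H v, v⟫ := by
    intro v
    set c : ℝ → ℝ := fun t => ⟪gradient f (xt + t • v), v⟫ with hc
    have hder : HasDerivAt c ⟪H v, v⟫ 0 := by
      have h1 : HasDerivAt (fun t : ℝ => xt + t • v) v 0 := by
        simpa using (hasDerivAt_id (0:ℝ)).smul_const v |>.const_add xt
      have h2' : HasFDerivAt (gradient f) H (xt + (0:ℝ) • v) := by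
        simpa using (hg1.differentiable one_ne_zero xt).hasFDerivAt
      have h3 : HasDerivAt (fun t : ℝ => gradient f (xt + t • v)) (H v) 0 :=
        HasFDerivAt.comp_hasDerivAt (l := gradient f) (l' := H) (x := 0) h2' h1
      simpa only [inner_zero_right, zero_add, inner_zero_left, add_zero] using h3.inner ℝ (hasDerivAt_const (0:ℝ) v)
    have hslope : Filter.Tendsto (slope c 0) (nhdsWithin 0 (Set.Ioi 0)) (nhds ⟪H v, v⟫) :=
      (hasDerivAt_iff_tendsto_slope.1 hder).mono_left
        (nhdsWithin_mono 0 (fun t ht => ne_of_gt ht))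
    refine ge_of_tendsto hslope ?_
    refine Filter.eventually_of_mem self_mem_nhdsWithin (fun t ht => ?_)
    have ht0 : (0:ℝ) < t := ht
    have hm := hmono xt (xt + t • v)
    have hsub : xt + t • v - xt = t • v := by abel
    rw [hsub] at hm
    have hin : ⟪gradient f (xt + t • v) - gradient f xt, t • v⟫ = t * (c t - c 0) := by
      rw [inner_sub_left, real_inner_smul_right, real_inner_smul_right]
      simp only [hc, zero_smul, add_zero]
      ring
    rw [hin] at hm
    have hn : ‖t • v‖ ^ 2 = t ^ 2 * ‖v‖ ^ 2 := by
      rw [norm_smul]; simp [abs_of_pos ht0]; ring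
    rw [hn] at hm
    have hslope_ge : γ * ‖v‖ ^ 2 ≤ (c t - c 0) / t := by
      rw [le_div_iff₀ ht0]
      nlinarith
    simpa [slope_def_field, div_eq_inv_mul] using hslope_ge
  -- lower bound on the Hessian applied to a vector
  have hHnorm : ∀ v, γ * ‖v‖ ≤ ‖H v‖ := by
    intro v
    rcases eq_or_ne v 0 with rfl | hv
    · simp
    · have h1 := hlower v
      have h2 : ⟪H v, v⟫ ≤ ‖H v‖ * ‖v‖ := real_inner_le_norm _ _
      have h3 : (0:ℝ) < ‖v‖ := norm_pos_iff.2 hv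
      nlinarith
  -- gradient norm bound: ‖∇f xt‖ ≤ β ‖xt - xstar‖
  have hgb : ‖gradient f xt‖ ≤ β * ‖w‖ := by
    set g := gradient f xt with hgdef
    have h1 := hsmooth xt (xt - β⁻¹ • g)
    have e1 : xt - β⁻¹ • g - xt = -β⁻¹ • g := by
      rw [neg_smul]; abel
    rw [e1] at h1
    have e2 : ⟪g, (-β⁻¹ : ℝ) • g⟫ = -β⁻¹ * ‖g‖ ^ 2 := by
      rw [real_inner_smul_right, real_inner_self_eq_norm_sq]
    have e3 : ‖(-β⁻¹ : ℝ) • g‖ ^ 2 = β⁻¹ ^ 2 * ‖g‖ ^ 2 := by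
      rw [norm_smul, Real.norm_eq_abs, abs_neg, abs_of_pos (by positivity : (0:ℝ) < β⁻¹)]
      ring
    rw [e2, e3] at h1
    have h2 := hmin (xt - β⁻¹ • g)
    have h3 := hsmooth xstar xt
    rw [hgstar] at h3
    simp only [inner_zero_left] at h3
    rw [← hw] at h3
    have e4 : β / 2 * (β⁻¹ ^ 2 * ‖g‖ ^ 2) = β⁻¹ / 2 * ‖g‖ ^ 2 := by
      field_simp
    rw [e4] at h1
    have key : β⁻¹ * ‖g‖ ^ 2 ≤ β * ‖w‖ ^ 2 := by linarith
    have e5 : β * (β⁻¹ * ‖g‖ ^ 2) = ‖g‖ ^ 2 := by field_simp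
    have hsq : ‖g‖ ^ 2 ≤ (β * ‖w‖) ^ 2 := by
      have h6 := mul_le_mul_of_nonneg_left key hβ.le
      rw [e5] at h6
      nlinarith [h6]
    have := (pow_le_pow_iff_left₀ (norm_nonneg g)
      (mul_nonneg hβ.le (norm_nonneg w)) two_ne_zero).1 hsq
    exact this
  -- Taylor bound: ‖H w - ∇f xt‖ ≤ L ‖w‖²
  have hTaylor : ‖H w - gradient f xt‖ ≤ L * ‖w‖ ^ 2 := by
    set φ : ℝ → EuclideanSpace ℝ (Fin d) :=
      fun s => gradient f (xstar + s • w) - s • (H w) with hφ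
    set φ' : ℝ → EuclideanSpace ℝ (Fin d) :=
      fun s => fderiv ℝ (gradient f) (xstar + s • w) w - H w with hφ'
    have hder : ∀ s ∈ Set.Icc (0:ℝ) 1, HasDerivWithinAt φ (φ' s) (Set.Icc 0 1) s := by
      intro s _
      have h1 : HasDerivAt (fun t : ℝ => xstar + t • w) w s := by
        simpa using (hasDerivAt_id s).smul_const w |>.const_add xstar
      have h2 : HasDerivAt (fun t : ℝ => gradient f (xstar + t • w))
          (fderiv ℝ (gradient f) (xstar + s • w) w) s :=
        ((hg1.differentiable one_ne_zero _).hasFDerivAt).comp_hasDerivAt s h1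
      have h3 : HasDerivAt (fun t : ℝ => t • (H w)) (H w) s := by
        simpa using (hasDerivAt_id s).smul_const (H w)
      exact (h2.sub h3).hasDerivWithinAt
    have hbound : ∀ s ∈ Set.Ico (0:ℝ) 1, ‖φ' s‖ ≤ L * ‖w‖ ^ 2 := by
      intro s hs
      have e1 : φ' s = (fderiv ℝ (gradient f) (xstar + s • w) - H) w := rfl
      rw [e1]
      calc ‖(fderiv ℝ (gradient f) (xstar + s • w) - H) w‖
          ≤ ‖fderiv ℝ (gradient f) (xstar + s • w) - H‖ * ‖w‖ :=
            ContinuousLinearMap.le_opNorm _ _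
        _ ≤ (L * ‖xstar + s • w - xt‖) * ‖w‖ := by
            gcongr; exact hLip _ _
        _ ≤ L * ‖w‖ ^ 2 := by
            have e2 : xstar + s • w - xt = (s - 1) • w := by
              rw [hw]; module
            rw [e2, norm_smul, Real.norm_eq_abs]
            have h1 : |s - 1| ≤ 1 := by
              rw [abs_le]; constructor <;> [linarith [hs.1]; linarith [hs.2.le]]
            calc L * (|s - 1| * ‖w‖) * ‖w‖ ≤ L * (1 * ‖w‖) * ‖w‖ := by gcongr
              _ = L * ‖w‖ ^ 2 := by ring
    have hmv := norm_image_sub_le_of_norm_deriv_le_segment' hder hbound 1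
      (Set.right_mem_Icc.2 zero_le_one)
    have e0 : φ 0 = 0 := by simp [hφ, hgstar]
    have e1 : φ 1 = gradient f xt - H w := by
      have exw : xstar + w = xt := by rw [hw]; abel
      simp only [hφ, one_smul, exw]
    rw [e0, e1, sub_zero, sub_zero, mul_one] at hmv
    calc ‖H w - gradient f xt‖ = ‖gradient f xt - H w‖ := by rw [norm_sub_rev]
      _ ≤ L * ‖w‖ ^ 2 := hmv
  -- inexactness bound: ‖H gt - ∇f xt‖ ≤ γ/4 ‖w‖
  have hg2 : ‖H gt - gradient f xt‖ ≤ γ / 4 * ‖w‖ := by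
    have e1 : 1 / (4 * (β / γ)) = γ / (4 * β) := by
      field_simp
    rw [e1] at hg
    calc ‖H gt - gradient f xt‖ ≤ γ / (4 * β) * ‖gradient f xt‖ := hg
      _ ≤ γ / (4 * β) * (β * ‖w‖) :=
          mul_le_mul_of_nonneg_left hgb (by positivity)
      _ = γ / 4 * ‖w‖ := by field_simp
  -- assemble
  have hu : (xt - gt) - xstar = w - gt := by rw [hw]; abel
  have hHu : H ((xt - gt) - xstar) = (H w - gradient f xt) - (H gt - gradient f xt) := by
    rw [hu, map_sub]; abel
  have hfinal : γ * ‖(xt - gt) - xstar‖ ≤ L * ‖w‖ ^ 2 + γ / 4 * ‖w‖ := by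
    calc γ * ‖(xt - gt) - xstar‖ ≤ ‖H ((xt - gt) - xstar)‖ := hHnorm _
      _ = ‖(H w - gradient f xt) - (H gt - gradient f xt)‖ := by rw [hHu]
      _ ≤ ‖H w - gradient f xt‖ + ‖H gt - gradient f xt‖ := norm_sub_le _ _
      _ ≤ L * ‖w‖ ^ 2 + γ / 4 * ‖w‖ := add_le_add hTaylor hg2
  have hstep : ‖(xt - gt) - xstar‖ ≤ (L * ‖w‖ ^ 2 + γ / 4 * ‖w‖) / γ := by
    rw [le_div_iff₀ hγ]
    linarith [hfinal]
  calc ‖(xt - gt) - xstar‖ ≤ (L * ‖w‖ ^ 2 + γ / 4 * ‖w‖) / γ := hstep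
    _ = 1 / 4 * ‖w‖ + L / γ * ‖w‖ ^ 2 := by field_simp; ring
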